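/- With the modified Stein solution f̃_h as above, if h is differentiable on ℝ \ (−1,1) with h and h' in E_σ, and Λ(h)(x) := (h(x)/x)', then f̃_h'(x) = x · f̃_{Λ(h)}(x) for all |x| ≥ 1. -/

import Mathlib

open MeasureTheory Set Filter Topology

/-- Density of `N(0,σ²)`. -/
noncomputable def gaussDens (σ x : ℝ) : ℝ :=
  (1 / (σ * Real.sqrt (2 * Real.pi))) * Real.exp (-x ^ 2 / (2 * σ ^ 2))

/-- `h ∈ E_σ`: Borel functions on `ℝ \ (−1,1)` integrable against `P·φ_σ` for
every polynomial `P`. -/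
def memEsig (σ : ℝ) (h : ℝ → ℝ) : Prop :=
  Measurable h ∧ ∀ P : Polynomial ℝ,
    IntegrableOn (fun x => |h x * P.eval x| * gaussDens σ x) {x : ℝ | 1 ≤ |x|}

/-- The solution `f̃_h` of the modified Stein equation:
`f̃_h(x) = (1/(σ²φ_σ(x))) ∫_x^∞ h φ_σ` for `x ≥ 1` and
`f̃_h(x) = (1/(σ²φ_σ(x))) ∫_{−∞}^x h φ_σ` for `x ≤ −1`. -/
noncomputable def tildeF (σ : ℝ) (h : ℝ → ℝ) (x : ℝ) : ℝ :=
  if 0 ≤ x then (1 / (σ ^ 2 * gaussDens σ x)) * ∫ t in Set.Ioi x, h t * gaussDens σ t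
  else (1 / (σ ^ 2 * gaussDens σ x)) * ∫ t in Set.Iio x, h t * gaussDens σ t

lemma gauss_pos {σ : ℝ} (hσ : 0 < σ) (x : ℝ) : 0 < gaussDens σ x := by
  unfold gaussDens; positivity

lemma gauss_cont (σ : ℝ) : Continuous (gaussDens σ) := by
  unfold gaussDens; fun_prop

lemma gauss_le {σ : ℝ} (hσ : 0 < σ) (x : ℝ) :
    gaussDens σ x ≤ 1 / (σ * Real.sqrt (2 * Real.pi)) := by
  unfold gaussDens
  have h1 : Real.exp (-x ^ 2 / (2 * σ ^ 2)) ≤ 1 := by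
    rw [Real.exp_le_one_iff]
    apply div_nonpos_of_nonpos_of_nonneg
    · nlinarith [sq_nonneg x]
    · positivity
  have h2 : (0:ℝ) < 1 / (σ * Real.sqrt (2 * Real.pi)) := by
    have := Real.sqrt_pos.2 (by positivity : (0:ℝ) < 2 * Real.pi)
    positivity
  nlinarith

lemma gauss_hasDerivAt {σ : ℝ} (hσ : 0 < σ) (x : ℝ) :
    HasDerivAt (gaussDens σ) (-x / σ ^ 2 * gaussDens σ x) x := by
  unfold gaussDens
  have h1 : HasDerivAt (fun y : ℝ => -y ^ 2 / (2 * σ ^ 2)) (-x / σ ^ 2) x := by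
    have : HasDerivAt (fun y : ℝ => -y ^ 2 / (2 * σ ^ 2)) (-(2 * x ^ (2-1)) / (2 * σ^2)) x := by
      simpa using (((hasDerivAt_pow 2 x).neg).div_const (2 * σ ^ 2))
    convert this using 1
    field_simp
    ring
  have := ((h1.exp).const_mul (1 / (σ * Real.sqrt (2 * Real.pi))))
  refine this.congr_deriv ?_
  ring

lemma memEsig_int {σ : ℝ} {h : ℝ → ℝ} (hσ : 0 < σ) (hh : memEsig σ h) :
    IntegrableOn (fun t => h t * gaussDens σ t) {x : ℝ | 1 ≤ |x|} := by
  have hm : Measurable fun t => h t * gaussDens σ t :=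
    hh.1.mul (gauss_cont σ).measurable
  rw [IntegrableOn, ← integrable_norm_iff hm.aestronglyMeasurable.restrict]
  refine (hh.2 1).congr (Filter.Eventually.of_forall fun t => ?_)
  simp [abs_mul, abs_of_pos (gauss_pos hσ t)]

lemma memEsig_int_div {σ : ℝ} {h : ℝ → ℝ} (hσ : 0 < σ) (hh : memEsig σ h) (n : ℕ)
    {S : Set ℝ} (hS : MeasurableSet S) (hS' : S ⊆ {x : ℝ | 1 ≤ |x|}) :
    IntegrableOn (fun t => h t * gaussDens σ t / t ^ n) S := by
  refine Integrable.mono ((memEsig_int hσ hh).mono_set hS')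
    ((hh.1.mul (gauss_cont σ).measurable).div
      (measurable_id.pow_const n)).aestronglyMeasurable.restrict
    (ae_restrict_of_forall_mem hS fun t ht => ?_)
  have h1 : (1:ℝ) ≤ |t| := hS' ht
  simp only [Real.norm_eq_abs, abs_div, abs_pow]
  calc |h t * gaussDens σ t| / |t| ^ n ≤ |h t * gaussDens σ t| / 1 ^ n := by
        apply div_le_div_of_nonneg_left (abs_nonneg _) (by positivity) ?_
        exact pow_le_pow_left₀ zero_le_one h1 n
    _ = |h t * gaussDens σ t| := by simp

lemma int_near {σ : ℝ} {h : ℝ → ℝ} (hσ : 0 < σ) (hm : Measurable h) {x ε C : ℝ}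
    (hC : ∀ y ∈ Metric.ball x ε, |h y| ≤ C) {S : Set ℝ} (hS : MeasurableSet S)
    (hSb : S ⊆ Metric.ball x ε) (hSfin : volume S < ⊤) :
    IntegrableOn (fun t => h t * gaussDens σ t) S := by
  have hc : IntegrableOn (fun _ : ℝ => |C| * (1 / (σ * Real.sqrt (2 * Real.pi)))) S :=
    integrableOn_const hSfin.ne
  refine hc.mono' (hm.mul (gauss_cont σ).measurable).aestronglyMeasurable.restrict
    (ae_restrict_of_forall_mem hS fun t ht => ?_)
  have h1 : |h t| ≤ |C| := le_trans (hC t (hSb ht)) (le_abs_self C)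
  have h2 : gaussDens σ t ≤ 1 / (σ * Real.sqrt (2 * Real.pi)) := gauss_le hσ t
  have h3 : 0 < gaussDens σ t := gauss_pos hσ t
  rw [Real.norm_eq_abs, abs_mul, abs_of_pos h3]
  exact mul_le_mul h1 h2 h3.le (abs_nonneg _)

lemma lam_hasDeriv {h : ℝ → ℝ} {t : ℝ} (hd : DifferentiableAt ℝ h t) (ht : 1 ≤ |t|) :
    HasDerivAt (fun y => h y / y) (deriv h t / t - h t / t ^ 2) t := by
  have ht0 : t ≠ 0 := by
    intro h0; rw [h0] at ht; norm_num at ht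
  have := hd.hasDerivAt.div (hasDerivAt_id t) ht0
  refine this.congr_deriv ?_
  simp only [id]
  field_simp

/-- With `Λ(h)(x) = (h(x)/x)'`, if `h` is differentiable on `ℝ \ (−1,1)` with
`h, h' ∈ E_σ`, then `f̃_h'(x) = x · f̃_{Λ(h)}(x)` for all `|x| ≥ 1`. -/
theorem stmt_17 (σ : ℝ) (hσ : 0 < σ) (h : ℝ → ℝ)
    (hdiff : ∀ x : ℝ, 1 ≤ |x| → DifferentiableAt ℝ h x)
    (hh : memEsig σ h) (hh' : memEsig σ (deriv h)) :
    ∀ x : ℝ, 1 ≤ |x| →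
      deriv (tildeF σ h) x = x * tildeF σ (deriv fun y => h y / y) x := by
  intro x hx
  have hσ0 : σ ≠ 0 := ne_of_gt hσ
  rcases le_abs.1 hx with hx1 | hx1
  · -- case 1 ≤ x
    have hx0 : (0:ℝ) < x := lt_of_lt_of_le one_pos hx1
    have hxne : x ≠ 0 := ne_of_gt hx0
    have hφx : 0 < gaussDens σ x := gauss_pos hσ x
    have hgm : Measurable fun t => h t * gaussDens σ t := hh.1.mul (gauss_cont σ).measurable
    have hxS : Ioi x ⊆ {t : ℝ | 1 ≤ |t|} := by
      intro t ht
      have h1t : (1:ℝ) ≤ t := le_of_lt (lt_of_le_of_lt hx1 ht)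
      simp only [mem_setOf_eq, abs_of_pos (lt_of_lt_of_le one_pos h1t)]
      exact h1t
    have hgI : IntegrableOn (fun t => h t * gaussDens σ t) (Ioi x) :=
      (memEsig_int hσ hh).mono_set hxS
    have hg1I : IntegrableOn (fun t => h t * gaussDens σ t / t) (Ioi x) := by
      simpa using memEsig_int_div hσ hh 1 measurableSet_Ioi hxS
    have hg2I : IntegrableOn (fun t => h t * gaussDens σ t / t ^ 2) (Ioi x) :=
      memEsig_int_div hσ hh 2 measurableSet_Ioi hxS
    have hg3I : IntegrableOn (fun t => deriv h t * gaussDens σ t / t) (Ioi x) := by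
      simpa using memEsig_int_div hσ hh' 1 measurableSet_Ioi hxS
    have hcx : ContinuousAt h x := (hdiff x hx).continuousAt
    obtain ⟨ε, hε, hball⟩ : ∃ ε > 0, ∀ y ∈ Metric.ball x ε, |h y| ≤ |h x| + 1 := by
      have hev : ∀ᶠ y in 𝓝 x, |h y| ≤ |h x| + 1 := by
        have ht : Filter.Tendsto (fun y => |h y|) (𝓝 x) (𝓝 |h x|) :=
          continuous_abs.continuousAt.comp hcx
        exact ht.eventually_le_const (by linarith)
      obtain ⟨ε, hε, hb⟩ := Metric.eventually_nhds_iff_ball.1 hev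
      exact ⟨ε, hε, hb⟩
    have hax : x - ε / 2 < x := by linarith
    have hIoc : IntegrableOn (fun t => h t * gaussDens σ t) (Ioc (x - ε / 2) x) := by
      refine int_near hσ hh.1 hball measurableSet_Ioc ?_ measure_Ioc_lt_top
      intro y hy
      simp only [Metric.mem_ball, Real.dist_eq, abs_sub_lt_iff]
      constructor <;> [linarith [hy.2]; linarith [hy.1]]
    have haI : IntegrableOn (fun t => h t * gaussDens σ t) (Ioi (x - ε / 2)) := by
      rw [← Ioc_union_Ioi_eq_Ioi hax.le]
      exact hIoc.union hgI
    have hcg : ContinuousAt (fun t => h t * gaussDens σ t) x :=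
      hcx.mul (gauss_cont σ).continuousAt
    have hII : IntervalIntegrable (fun t => h t * gaussDens σ t) volume (x - ε / 2) x := by
      rw [intervalIntegrable_iff_integrableOn_Ioc_of_le hax.le]
      exact hIoc
    have hd0 : HasDerivAt (fun y => ∫ t in (x - ε / 2)..y, h t * gaussDens σ t)
        (h x * gaussDens σ x) x :=
      intervalIntegral.integral_hasDerivAt_right hII
        hgm.aestronglyMeasurable.stronglyMeasurableAtFilter hcg
    have heqF : (fun y => ∫ t in Ioi y, h t * gaussDens σ t) =ᶠ[nhds x]
        fun y => (∫ t in Ioi (x - ε / 2), h t * gaussDens σ t)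
          - ∫ t in (x - ε / 2)..y, h t * gaussDens σ t := by
      filter_upwards [Ioi_mem_nhds hax] with y hy
      have hs : ∫ t in Ioi (x - ε / 2), h t * gaussDens σ t
          = (∫ t in Ioc (x - ε / 2) y, h t * gaussDens σ t)
            + ∫ t in Ioi y, h t * gaussDens σ t := by
        rw [← setIntegral_union (Ioc_disjoint_Ioi le_rfl) measurableSet_Ioi
          (haI.mono_set Ioc_subset_Ioi_self) (haI.mono_set (Ioi_subset_Ioi hy.le)),
          Ioc_union_Ioi_eq_Ioi hy.le]
      rw [intervalIntegral.integral_of_le hy.le]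
      linarith
    have hF : HasDerivAt (fun y => ∫ t in Ioi y, h t * gaussDens σ t)
        (-(h x * gaussDens σ x)) x := by
      simpa using (((hasDerivAt_const x
        (∫ t in Ioi (x - ε / 2), h t * gaussDens σ t)).sub hd0).congr_of_eventuallyEq heqF)
    have hφd : HasDerivAt (fun y => σ ^ 2 * gaussDens σ y)
        (σ ^ 2 * (-x / σ ^ 2 * gaussDens σ x)) x := (gauss_hasDerivAt hσ x).const_mul (σ ^ 2)
    have hden : σ ^ 2 * gaussDens σ x ≠ 0 := ne_of_gt (by positivity)
    have hQ := hF.div hφd hden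
    have heqT : tildeF σ h =ᶠ[nhds x] fun y =>
        (∫ t in Ioi y, h t * gaussDens σ t) / (σ ^ 2 * gaussDens σ y) := by
      filter_upwards [Ioi_mem_nhds hx0] with y hy
      rw [tildeF, if_pos (le_of_lt hy), one_div_mul_eq_div]
    have hT := hQ.congr_of_eventuallyEq heqT
    -- integration by parts for the RHS
    have hGd : ∀ t ∈ Ioi x, HasDerivAt (fun y => h y / y * gaussDens σ y)
        (deriv h t * gaussDens σ t / t - h t * gaussDens σ t / t ^ 2
          - h t * gaussDens σ t / σ ^ 2) t := by
      intro t ht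
      have ht1 : (1:ℝ) ≤ |t| := hxS ht
      have ht0 : t ≠ 0 := ne_of_gt (lt_trans hx0 ht)
      have hder := (lam_hasDeriv (hdiff t ht1) ht1).mul (gauss_hasDerivAt hσ t)
      refine hder.congr_deriv ?_
      field_simp
      ring
    have hg32I : IntegrableOn (fun t => deriv h t * gaussDens σ t / t
        - h t * gaussDens σ t / t ^ 2) (Ioi x) := hg3I.sub hg2I
    have hgc2I : IntegrableOn (fun t => h t * gaussDens σ t / σ ^ 2) (Ioi x) :=
      hgI.div_const _
    have hG'I : IntegrableOn (fun t => deriv h t * gaussDens σ t / t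
        - h t * gaussDens σ t / t ^ 2 - h t * gaussDens σ t / σ ^ 2) (Ioi x) :=
      hg32I.sub hgc2I
    have hGI : IntegrableOn (fun t => h t / t * gaussDens σ t) (Ioi x) :=
      hg1I.congr (ae_of_all _ fun t => by ring)
    have hGlim := tendsto_zero_of_hasDerivAt_of_integrableOn_Ioi hGd hG'I hGI
    have hGc : ContinuousWithinAt (fun y => h y / y * gaussDens σ y) (Ici x) x :=
      ((hcx.div continuousAt_id hxne).mul (gauss_cont σ).continuousAt).continuousWithinAt
    have hIBP := integral_Ioi_of_hasDerivAt_of_tendsto hGc hGd hG'I hGlim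
    have hsplit : ∫ t in Ioi x, (deriv h t * gaussDens σ t / t - h t * gaussDens σ t / t ^ 2
        - h t * gaussDens σ t / σ ^ 2)
        = (∫ t in Ioi x, deriv h t * gaussDens σ t / t)
          - (∫ t in Ioi x, h t * gaussDens σ t / t ^ 2)
          - (∫ t in Ioi x, h t * gaussDens σ t) / σ ^ 2 := by
      rw [integral_sub hg32I hgc2I, integral_sub hg3I hg2I, integral_div]
    have hLam : ∫ t in Ioi x, deriv (fun y => h y / y) t * gaussDens σ t
        = (∫ t in Ioi x, deriv h t * gaussDens σ t / t)
          - ∫ t in Ioi x, h t * gaussDens σ t / t ^ 2 := by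
      rw [← integral_sub hg3I hg2I]
      refine setIntegral_congr_fun measurableSet_Ioi fun t ht => ?_
      have ht1 : (1:ℝ) ≤ |t| := hxS ht
      rw [(lam_hasDeriv (hdiff t ht1) ht1).deriv]
      ring
    have hval : (∫ t in Ioi x, deriv h t * gaussDens σ t / t)
        - ∫ t in Ioi x, h t * gaussDens σ t / t ^ 2
        = -(h x / x * gaussDens σ x) + (∫ t in Ioi x, h t * gaussDens σ t) / σ ^ 2 := by
      rw [hsplit] at hIBP
      linarith
    rw [hT.deriv]
    simp only [tildeF, if_pos (le_of_lt hx0)]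
    rw [hLam, hval]
    field_simp
    ring
  · -- case x ≤ -1
    have hxm1 : x ≤ -1 := by linarith
    have hx0 : x < 0 := by linarith
    have hxne : x ≠ 0 := ne_of_lt hx0
    have hφx : 0 < gaussDens σ x := gauss_pos hσ x
    have hgm : Measurable fun t => h t * gaussDens σ t := hh.1.mul (gauss_cont σ).measurable
    have hxS : Iic x ⊆ {t : ℝ | 1 ≤ |t|} := by
      intro t ht
      have h1t : t ≤ -1 := le_trans ht hxm1
      simp only [mem_setOf_eq, abs_of_neg (lt_of_le_of_lt h1t (by norm_num : (-1:ℝ) < 0))]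
      linarith
    have hgI : IntegrableOn (fun t => h t * gaussDens σ t) (Iic x) :=
      (memEsig_int hσ hh).mono_set hxS
    have hg1I : IntegrableOn (fun t => h t * gaussDens σ t / t) (Iic x) := by
      simpa using memEsig_int_div hσ hh 1 measurableSet_Iic hxS
    have hg2I : IntegrableOn (fun t => h t * gaussDens σ t / t ^ 2) (Iic x) :=
      memEsig_int_div hσ hh 2 measurableSet_Iic hxS
    have hg3I : IntegrableOn (fun t => deriv h t * gaussDens σ t / t) (Iic x) := by
      simpa using memEsig_int_div hσ hh' 1 measurableSet_Iic hxS
    have hcx : ContinuousAt h x := (hdiff x hx).continuousAt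
    obtain ⟨ε, hε, hball⟩ : ∃ ε > 0, ∀ y ∈ Metric.ball x ε, |h y| ≤ |h x| + 1 := by
      have hev : ∀ᶠ y in 𝓝 x, |h y| ≤ |h x| + 1 := by
        have ht : Filter.Tendsto (fun y => |h y|) (𝓝 x) (𝓝 |h x|) :=
          continuous_abs.continuousAt.comp hcx
        exact ht.eventually_le_const (by linarith)
      obtain ⟨ε, hε, hb⟩ := Metric.eventually_nhds_iff_ball.1 hev
      exact ⟨ε, hε, hb⟩
    have hax : x < x + ε / 2 := by linarith
    have hIoc : IntegrableOn (fun t => h t * gaussDens σ t) (Ioc x (x + ε / 2)) := by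
      refine int_near hσ hh.1 hball measurableSet_Ioc ?_ measure_Ioc_lt_top
      intro y hy
      simp only [Metric.mem_ball, Real.dist_eq, abs_sub_lt_iff]
      constructor <;> [linarith [hy.2]; linarith [hy.1]]
    have haI : IntegrableOn (fun t => h t * gaussDens σ t) (Iic (x + ε / 2)) := by
      rw [← Iic_union_Ioc_eq_Iic hax.le]
      exact hgI.union hIoc
    have hcg : ContinuousAt (fun t => h t * gaussDens σ t) x :=
      hcx.mul (gauss_cont σ).continuousAt
    have hII : IntervalIntegrable (fun t => h t * gaussDens σ t) volume x (x + ε / 2) := by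
      rw [intervalIntegrable_iff_integrableOn_Ioc_of_le hax.le]
      exact hIoc
    have hd0 : HasDerivAt (fun y => ∫ t in y..(x + ε / 2), h t * gaussDens σ t)
        (-(h x * gaussDens σ x)) x :=
      intervalIntegral.integral_hasDerivAt_left hII
        hgm.aestronglyMeasurable.stronglyMeasurableAtFilter hcg
    have heqF : (fun y => ∫ t in Iio y, h t * gaussDens σ t) =ᶠ[nhds x]
        fun y => (∫ t in Iic (x + ε / 2), h t * gaussDens σ t)
          - ∫ t in y..(x + ε / 2), h t * gaussDens σ t := by
      filter_upwards [Iio_mem_nhds hax] with y hy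
      have hs : ∫ t in Iic (x + ε / 2), h t * gaussDens σ t
          = (∫ t in Iic y, h t * gaussDens σ t)
            + ∫ t in Ioc y (x + ε / 2), h t * gaussDens σ t := by
        rw [← setIntegral_union (Iic_disjoint_Ioc le_rfl) measurableSet_Ioc
          (haI.mono_set (Iic_subset_Iic.2 hy.le)) (haI.mono_set Ioc_subset_Iic_self),
          Iic_union_Ioc_eq_Iic hy.le]
      rw [intervalIntegral.integral_of_le hy.le, ← integral_Iic_eq_integral_Iio]
      linarith
    have hF : HasDerivAt (fun y => ∫ t in Iio y, h t * gaussDens σ t)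
        (h x * gaussDens σ x) x := by
      simpa using (((hasDerivAt_const x
        (∫ t in Iic (x + ε / 2), h t * gaussDens σ t)).sub hd0).congr_of_eventuallyEq heqF)
    have hφd : HasDerivAt (fun y => σ ^ 2 * gaussDens σ y)
        (σ ^ 2 * (-x / σ ^ 2 * gaussDens σ x)) x := (gauss_hasDerivAt hσ x).const_mul (σ ^ 2)
    have hden : σ ^ 2 * gaussDens σ x ≠ 0 := ne_of_gt (by positivity)
    have hQ := hF.div hφd hden
    have heqT : tildeF σ h =ᶠ[nhds x] fun y =>
        (∫ t in Iio y, h t * gaussDens σ t) / (σ ^ 2 * gaussDens σ y) := by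
      filter_upwards [Iio_mem_nhds hx0] with y hy
      rw [tildeF, if_neg (not_le.2 hy), one_div_mul_eq_div]
    have hT := hQ.congr_of_eventuallyEq heqT
    -- integration by parts for the RHS
    have hGd : ∀ t ∈ Iic x, HasDerivAt (fun y => h y / y * gaussDens σ y)
        (deriv h t * gaussDens σ t / t - h t * gaussDens σ t / t ^ 2
          - h t * gaussDens σ t / σ ^ 2) t := by
      intro t ht
      have ht1 : (1:ℝ) ≤ |t| := hxS ht
      have ht0 : t ≠ 0 := ne_of_lt (lt_of_le_of_lt (le_trans ht hxm1) (by norm_num))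
      have hder := (lam_hasDeriv (hdiff t ht1) ht1).mul (gauss_hasDerivAt hσ t)
      refine hder.congr_deriv ?_
      field_simp
      ring
    have hg32I : IntegrableOn (fun t => deriv h t * gaussDens σ t / t
        - h t * gaussDens σ t / t ^ 2) (Iic x) := hg3I.sub hg2I
    have hgc2I : IntegrableOn (fun t => h t * gaussDens σ t / σ ^ 2) (Iic x) :=
      hgI.div_const _
    have hG'I : IntegrableOn (fun t => deriv h t * gaussDens σ t / t
        - h t * gaussDens σ t / t ^ 2 - h t * gaussDens σ t / σ ^ 2) (Iic x) :=
      hg32I.sub hgc2I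
    have hGI : IntegrableOn (fun t => h t / t * gaussDens σ t) (Iic x) :=
      hg1I.congr (ae_of_all _ fun t => by ring)
    have hGlim := tendsto_zero_of_hasDerivAt_of_integrableOn_Iic hGd hG'I hGI
    have hGc : ContinuousWithinAt (fun y => h y / y * gaussDens σ y) (Iic x) x :=
      ((hcx.div continuousAt_id hxne).mul (gauss_cont σ).continuousAt).continuousWithinAt
    have hIBP := integral_Iic_of_hasDerivAt_of_tendsto hGc
      (fun t ht => hGd t (le_of_lt (mem_Iio.1 ht))) hG'I hGlim
    have hsplit : ∫ t in Iic x, (deriv h t * gaussDens σ t / t - h t * gaussDens σ t / t ^ 2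
        - h t * gaussDens σ t / σ ^ 2)
        = (∫ t in Iic x, deriv h t * gaussDens σ t / t)
          - (∫ t in Iic x, h t * gaussDens σ t / t ^ 2)
          - (∫ t in Iic x, h t * gaussDens σ t) / σ ^ 2 := by
      rw [integral_sub hg32I hgc2I, integral_sub hg3I hg2I, integral_div]
    have hLam : ∫ t in Iic x, deriv (fun y => h y / y) t * gaussDens σ t
        = (∫ t in Iic x, deriv h t * gaussDens σ t / t)
          - ∫ t in Iic x, h t * gaussDens σ t / t ^ 2 := by
      rw [← integral_sub hg3I hg2I]
      refine setIntegral_congr_fun measurableSet_Iic fun t ht => ?_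
      have ht1 : (1:ℝ) ≤ |t| := hxS ht
      rw [(lam_hasDeriv (hdiff t ht1) ht1).deriv]
      ring
    have hval : (∫ t in Iic x, deriv h t * gaussDens σ t / t)
        - ∫ t in Iic x, h t * gaussDens σ t / t ^ 2
        = h x / x * gaussDens σ x + (∫ t in Iic x, h t * gaussDens σ t) / σ ^ 2 := by
      rw [hsplit] at hIBP
      linarith
    rw [hT.deriv]
    simp only [tildeF, if_neg (not_le.2 hx0)]
    simp only [← integral_Iic_eq_integral_Iio]
    rw [hLam, hval]
    field_simp
    ring
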